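/- arXiv:1502.01690 — 3 statements merged into one kernel-verified Lean document; each statement's English description precedes it below -/
import Mathlib

section
/- Let m, n ≥ 1 be integers. If there exists a homomorphism of unital ℂ-algebras from the matrix algebra M_m(ℂ) to the matrix algebra M_n(ℂ), then m divides n and there is an isomorphism of unital ℂ-algebras M_n(ℂ) ≅ M_m(ℂ) ⊗_ℂ M_{n/m}(ℂ). -/
open TensorProduct

lemma trace_idem_nat {n : ℕ} (A : Matrix (Fin n) (Fin n) ℂ) (hA : A * A = A) :
    ∃ r : ℕ, A.trace = (r : ℂ) := by
  set P := Matrix.toLin' A with hP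
  have hPP : P ∘ₗ P = P := by
    rw [hP, ← Matrix.toLin'_mul, hA]
  obtain ⟨p, hp⟩ := (LinearMap.isProj_iff_isIdempotentElem P).mpr hPP
  refine ⟨Module.finrank ℂ p, ?_⟩
  have h1 : LinearMap.trace ℂ _ P = (Module.finrank ℂ p : ℂ) := hp.trace
  have h2 : LinearMap.trace ℂ _ P = A.trace := by
    rw [LinearMap.trace_eq_matrix_trace ℂ (Pi.basisFun ℂ (Fin n)) P]
    congr 1
    rw [LinearMap.toMatrix_eq_toMatrix', hP, LinearMap.toMatrix'_toLin']
  rw [← h2, h1]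

/-- If there exists a homomorphism of unital ℂ-algebras `M_m(ℂ) → M_n(ℂ)` (with `m, n ≥ 1`),
then `m` divides `n` and `M_n(ℂ) ≅ M_m(ℂ) ⊗[ℂ] M_{n/m}(ℂ)` as unital ℂ-algebras. -/
theorem matrix_algHom_factorization (m n : ℕ) (hm : 1 ≤ m) (hn : 1 ≤ n)
    (h : Nonempty (Matrix (Fin m) (Fin m) ℂ →ₐ[ℂ] Matrix (Fin n) (Fin n) ℂ)) :
    m ∣ n ∧
      Nonempty (Matrix (Fin n) (Fin n) ℂ ≃ₐ[ℂ]
        Matrix (Fin m) (Fin m) ℂ ⊗[ℂ] Matrix (Fin (n / m)) (Fin (n / m)) ℂ) := by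
  obtain ⟨f⟩ := h
  have hm0 : 0 < m := hm
  let i0 : Fin m := ⟨0, hm0⟩
  set E : Fin m → Fin m → Matrix (Fin m) (Fin m) ℂ :=
    fun i j => Matrix.single i j 1 with hE
  -- all diagonal idempotents have the same trace under f
  have htr : ∀ i : Fin m, (f (E i i)).trace = (f (E i0 i0)).trace := by
    intro i
    have h1 : E i i = E i i0 * E i0 i := by simp [hE]
    have h2 : E i0 i0 = E i0 i * E i i0 := by simp [hE]
    rw [h1, h2, map_mul, map_mul, Matrix.trace_mul_comm]
  -- sum of diagonal units is 1
  have hsum : (∑ i : Fin m, E i i) = 1 := by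
    ext a b
    simp only [Matrix.sum_apply, hE, Matrix.single, Matrix.of_apply, Matrix.one_apply]
    by_cases hab : a = b
    · simp [hab, Finset.sum_ite_eq]
    · simp only [hab, if_false]
      rw [Finset.sum_eq_zero]
      intro x _
      rw [if_neg]
      exact fun hx => hab (hx.1.symm.trans hx.2)
  -- trace of f of the idempotent is a natural number r
  have hidem : f (E i0 i0) * f (E i0 i0) = f (E i0 i0) := by
    rw [← map_mul]
    congr 1
    simp [hE]
  obtain ⟨r, hr⟩ := trace_idem_nat _ hidem
  -- n = m * r
  have hmain : (n : ℂ) = (m : ℂ) * (r : ℂ) := by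
    have : (f (∑ i : Fin m, E i i)).trace = (n : ℂ) := by
      rw [hsum, map_one, Matrix.trace_one]
      simp
    rw [map_sum, Matrix.trace_sum] at this
    have : (∑ i : Fin m, (f (E i0 i0)).trace) = (n : ℂ) := by
      rw [← this]
      exact Finset.sum_congr rfl fun i _ => (htr i).symm
    rw [Finset.sum_const, Finset.card_univ, Fintype.card_fin, nsmul_eq_mul, hr] at this
    exact this.symm
  have hnmr : n = m * r := by
    have : (n : ℂ) = ((m * r : ℕ) : ℂ) := by push_cast; exact hmain
    exact_mod_cast this
  have hdvd : m ∣ n := ⟨r, hnmr⟩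
  refine ⟨hdvd, ?_⟩
  have hk : n / m = r := by rw [hnmr, Nat.mul_div_cancel_left _ hm0]
  -- Build the algebra isomorphism
  have hnk : n = (n / m) * m := by rw [hk, hnmr, mul_comm]
  let e1 : Fin n ≃ Fin (n / m) × Fin m :=
    (finCongr hnk).trans finProdFinEquiv.symm
  let E1 : Matrix (Fin n) (Fin n) ℂ ≃ₐ[ℂ] Matrix (Fin (n / m) × Fin m) (Fin (n / m) × Fin m) ℂ :=
    Matrix.reindexAlgEquiv ℂ ℂ e1
  let E2 : Matrix (Fin (n / m) × Fin m) (Fin (n / m) × Fin m) ℂ ≃ₐ[ℂ]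
      Matrix (Fin (n / m)) (Fin (n / m)) (Matrix (Fin m) (Fin m) ℂ) :=
    (Matrix.compAlgEquiv (Fin (n / m)) (Fin m) ℂ ℂ).symm
  let E3 : Matrix (Fin (n / m)) (Fin (n / m)) (Matrix (Fin m) (Fin m) ℂ) ≃ₐ[ℂ]
      Matrix (Fin m) (Fin m) ℂ ⊗[ℂ] Matrix (Fin (n / m)) (Fin (n / m)) ℂ :=
    matrixEquivTensor (Fin (n / m)) ℂ (Matrix (Fin m) (Fin m) ℂ)
  exact ⟨(E1.trans E2).trans E3⟩
end

section
/- Let R and S be unital rings. If R and S are Morita equivalent, i.e. the category of left R-modules is equivalent to the category of left S-modules, then the centers Z(R) and Z(S) are isomorphic as rings. -/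
open CategoryTheory

noncomputable section

universe u

variable {C D : Type*} [Category C] [Category D] [Preadditive C] [Preadditive D]

theorem end_app_add {E : Type*} [Category E] [Preadditive E] (x y : End (𝟭 E)) (X : E) :
    (x + y).app X = x.app X + y.app X := rfl

/-- Transport an endomorphism of the identity functor along an equivalence. -/
def endTransport (e : C ≌ D) (η : End (𝟭 C)) : End (𝟭 D) where
  app N := e.counitInv.app N ≫ e.functor.map (η.app (e.inverse.obj N)) ≫ e.counit.app N
  naturality N N' f := by
    have h1 := e.counitInv.naturality f
    have h2 := e.counit.naturality f
    have h3 := η.naturality (e.inverse.map f)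
    simp only [Functor.id_obj, Functor.id_map, Functor.comp_obj, Functor.comp_map] at h1 h2 h3 ⊢
    rw [reassoc_of% h1, ← Functor.map_comp_assoc, h3, Functor.map_comp_assoc, h2]
    simp

theorem endTransport_symm_apply (e : C ≌ D) (η : End (𝟭 C)) :
    endTransport e.symm (endTransport e η) = η := by
  refine NatTrans.ext (funext fun M => ?_)
  show e.unit.app M ≫ e.inverse.map (e.counitInv.app (e.functor.obj M) ≫
      e.functor.map (η.app (e.inverse.obj (e.functor.obj M))) ≫ e.counit.app (e.functor.obj M)) ≫
      e.unitInv.app M = η.app M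
  simp only [Functor.map_comp, Category.assoc]
  rw [Equivalence.counitInv_app_functor]
  rw [show e.inverse.map (e.functor.map (e.unit.app M)) = (e.functor ⋙ e.inverse).map (e.unit.app M) from rfl]
  erw [← e.unit.naturality_assoc (e.unit.app M)]
  rw [show e.inverse.map (e.functor.map (η.app (e.inverse.obj (e.functor.obj M)))) = (e.functor ⋙ e.inverse).map (η.app (e.inverse.obj (e.functor.obj M))) from rfl]
  erw [← e.unit.naturality_assoc (η.app (e.inverse.obj (e.functor.obj M)))]
  simp only [Functor.id_map, Functor.id_obj]
  rw [e.unit_inverse_comp_assoc]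
  have := η.naturality (e.unit.app M)
  simp only [Functor.id_map] at this
  erw [reassoc_of% this]
  simp

def endRingEquivOfEquiv (e : C ≌ D) [e.functor.Additive] [e.inverse.Additive] :
    End (𝟭 C) ≃+* End (𝟭 D) where
  toFun := endTransport e
  invFun := endTransport e.symm
  left_inv := endTransport_symm_apply e
  right_inv := endTransport_symm_apply e.symm
  map_mul' x y := by
    refine NatTrans.ext (funext fun N => ?_)
    change _ = (endTransport e y ≫ endTransport e x).app N
    simp only [endTransport, End.mul_def, NatTrans.comp_app, Functor.id_obj, Functor.map_comp,
      Category.assoc]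
    simp
  map_add' x y := by
    refine NatTrans.ext (funext fun N => ?_)
    simp only [endTransport, end_app_add, Functor.map_add, Preadditive.add_comp,
      Preadditive.comp_add]

section Center

variable (R : Type) [Ring R]

/-- Central scalar multiplication as a natural endomorphism of the identity functor. -/
def centerToEndFun (z : Subring.center R) : End (𝟭 (ModuleCat.{0} R)) where
  app M := ModuleCat.ofHom
    { toFun := fun m => (z : R) • m
      map_add' := fun m n => smul_add _ _ _
      map_smul' := fun r m => by
        simp only [RingHom.id_apply]
        rw [← mul_smul, ← mul_smul, Subring.mem_center_iff.mp z.2 r] }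
  naturality M N f := by
    ext m
    exact (f.hom.map_smul _ _).symm

/-- The center of `R` maps into endomorphisms of the identity functor on `ModuleCat R`. -/
def centerToEnd : Subring.center R →+* End (𝟭 (ModuleCat.{0} R)) where
  toFun := centerToEndFun R
  map_one' := by
    refine NatTrans.ext (funext fun M => ?_)
    exact ModuleCat.hom_ext (LinearMap.ext fun m => one_smul R m)
  map_mul' z w := by
    refine NatTrans.ext (funext fun M => ?_)
    exact ModuleCat.hom_ext (LinearMap.ext fun m => mul_smul (z : R) (w : R) m)
  map_zero' := by
    refine NatTrans.ext (funext fun M => ?_)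
    exact ModuleCat.hom_ext (LinearMap.ext fun m => zero_smul R m)
  map_add' z w := by
    refine NatTrans.ext (funext fun M => ?_)
    exact ModuleCat.hom_ext (LinearMap.ext fun m => add_smul (z : R) (w : R) m)

theorem centerToEnd_bijective : Function.Bijective (centerToEnd R) := by
  constructor
  · intro z w hzw
    have h1 : (centerToEndFun R z).app (ModuleCat.of R R) =
        (centerToEndFun R w).app (ModuleCat.of R R) := by
      exact congrArg (fun η : End (𝟭 (ModuleCat.{0} R)) => η.app (ModuleCat.of R R)) hzw
    have h2 : (z : R) • (1 : R) = (w : R) • (1 : R) := LinearMap.congr_fun (congrArg ModuleCat.Hom.hom h1) (1 : R)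
    exact Subtype.ext (by simpa using h2)
  · intro η
    set r : R := η.app (ModuleCat.of R R) (1 : R) with hr
    have key : ∀ (M : ModuleCat.{0} R) (m : M), η.app M m = r • m := by
      intro M m
      let g : ModuleCat.of R R ⟶ M := ModuleCat.ofHom
        { toFun := fun x : R => x • m
          map_add' := fun (x y : R) => add_smul x y m
          map_smul' := fun a (x : R) => by simp [mul_smul] }
      have hnat := LinearMap.congr_fun (congrArg ModuleCat.Hom.hom (η.naturality g)) (1 : R)
      simpa [g, ModuleCat.hom_comp, LinearMap.comp_apply] using hnat
    have hrc : r ∈ Subring.center R := by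
      rw [Subring.mem_center_iff]
      intro a
      have h1 : η.app (ModuleCat.of R R) a = r • a := key (ModuleCat.of R R) a
      have h2 : η.app (ModuleCat.of R R) a = a * r := by
        have h3 := (η.app (ModuleCat.of R R)).hom.map_smul a (1 : R)
        simp only [smul_eq_mul, mul_one] at h3
        rw [h3, hr]
      rw [h1] at h2
      simpa [smul_eq_mul] using h2.symm
    refine ⟨⟨r, hrc⟩, ?_⟩
    refine NatTrans.ext (funext fun M => ?_)
    exact ModuleCat.hom_ext (LinearMap.ext fun m => (key M m).symm)

/-- The center of a ring is isomorphic to the endomorphism ring of the identity functor. -/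
noncomputable def centerRingEquivEnd : Subring.center R ≃+* End (𝟭 (ModuleCat.{0} R)) :=
  RingEquiv.ofBijective (centerToEnd R) (centerToEnd_bijective R)

end Center

/-- Morita equivalent unital rings have isomorphic centers. -/
theorem morita_center_iso (R S : Type) [Ring R] [Ring S]
    (h : Nonempty (ModuleCat.{0} R ≌ ModuleCat.{0} S)) :
    Nonempty (Subring.center R ≃+* Subring.center S) := by
  obtain ⟨e⟩ := h
  have h1 : e.functor.Additive := e.functor.additive_of_preserves_binary_products
  have h2 : e.inverse.Additive := e.inverse.additive_of_preserves_binary_products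
  exact ⟨((centerRingEquivEnd R).trans (endRingEquivOfEquiv e)).trans
    (centerRingEquivEnd S).symm⟩

end
end

section
/- Let C and D be braided monoidal categories, let F : D × C ⥤ C be a braided monoidal functor on the product braided monoidal category D × C, and suppose there is a monoidal natural isomorphism between the functor c ↦ F(1_D, c) and the identity functor of C. Then for every object d of D, the object x = F(d, 1_C) is transparent in C: for every object y of C, the double braiding β_{y,x} ∘ β_{x,y} : x ⊗ y → x ⊗ y equals the identity of x ⊗ y. -/
open CategoryTheory MonoidalCategory Functor.LaxMonoidal

section

variable (C D : Type*) [Category C] [Category D] [MonoidalCategory C] [MonoidalCategory D]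

/-- The functor `C ⥤ D × C`, `c ↦ (𝟙_ D, c)`, is lax monoidal (in fact strong monoidal). -/
instance Prod.sectR_laxMonoidal : (Prod.sectR (𝟙_ D) C).LaxMonoidal where
  ε := 𝟙 (𝟙_ (D × C))
  μ X Y := ((λ_ (𝟙_ D)).hom, 𝟙 (X ⊗ Y))
  μ_natural_left f X' := by
    refine Prod.ext ?_ ?_ <;> simp [Prod.sectR, Prod.mkHom]
  μ_natural_right X' f := by
    refine Prod.ext ?_ ?_ <;> simp [Prod.sectR, Prod.mkHom]
  associativity X Y Z := by
    refine Prod.ext ?_ ?_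
    · dsimp
      simp [Prod.sectR, Prod.mkHom]
      monoidal
    · dsimp
      simp [Prod.sectR, Prod.mkHom]
  left_unitality X := by
    refine Prod.ext ?_ ?_ <;> simp [Prod.sectR, Prod.mkHom, MonoidalCategory.unitors_equal]
  right_unitality X := by
    refine Prod.ext ?_ ?_
    · dsimp
      simp [Prod.sectR, Prod.mkHom, MonoidalCategory.unitors_equal]
    · dsimp
      simp [Prod.sectR, Prod.mkHom]

end

/-- If `F : D × C ⥤ C` is a braided monoidal functor on the product braided monoidal
category (the braided condition being stated componentwise, the braiding of `D × C` being
componentwise) such that the functor `c ↦ F (𝟙_ D, c)` is monoidally naturally isomorphic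
to the identity functor of `C`, then for every `d : D` the object `F (d, 𝟙_ C)` is
transparent in `C` : all double braidings with it are identities. -/
theorem braided_action_lands_in_centralizer
    {C D : Type*} [Category C] [Category D] [MonoidalCategory C] [MonoidalCategory D]
    [BraidedCategory C] [BraidedCategory D]
    (F : (D × C) ⥤ C) [F.Monoidal]
    (hbraided : ∀ X Y : D × C,
      μ F X Y ≫ F.map (((β_ X.1 Y.1).hom, (β_ X.2 Y.2).hom) : X ⊗ Y ⟶ Y ⊗ X) =
        (β_ (F.obj X) (F.obj Y)).hom ≫ μ F Y X)
    (e : Prod.sectR (𝟙_ D) C ⋙ F ≅ 𝟭 C) [NatTrans.IsMonoidal e.hom] :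
    ∀ (d : D) (y : C),
      (β_ (F.obj (d, 𝟙_ C)) y).hom ≫ (β_ y (F.obj (d, 𝟙_ C))).hom =
        𝟙 (F.obj (d, 𝟙_ C) ⊗ y) := by
  intro d y
  set x := F.obj (d, 𝟙_ C)
  set z := F.obj (𝟙_ D, y)
  have key : (β_ x z).hom ≫ (β_ z x).hom = 𝟙 (x ⊗ z) := by
    have h1 := hbraided (d, 𝟙_ C) (𝟙_ D, y)
    have h2 := hbraided (𝟙_ D, y) (d, 𝟙_ C)
    rw [← cancel_mono (μ F (d, 𝟙_ C) (𝟙_ D, y))]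
    rw [Category.assoc, Category.id_comp, ← h2, ← Category.assoc, ← h1, Category.assoc,
      ← F.map_comp]
    convert Category.comp_id _ using 2
    rw [← F.map_id]
    congr 1
    refine Prod.ext ?_ ?_ <;> dsimp <;>
      simp [braiding_tensorUnit_left, braiding_tensorUnit_right]
  have hf : IsIso (e.hom.app y) := inferInstance
  rw [← cancel_epi (x ◁ e.hom.app y)]
  have n1 : x ◁ e.hom.app y ≫ (β_ x y).hom = (β_ x z).hom ≫ e.hom.app y ▷ x :=
    BraidedCategory.braiding_naturality_right x (e.hom.app y)
  have n2 : e.hom.app y ▷ x ≫ (β_ y x).hom = (β_ z x).hom ≫ x ◁ e.hom.app y :=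
    BraidedCategory.braiding_naturality_left (e.hom.app y) x
  rw [← Category.assoc, n1]
  erw [Category.assoc, n2]
  erw [← Category.assoc, key]
  exact (Category.id_comp (x ◁ e.hom.app y)).trans (Category.comp_id (x ◁ e.hom.app y)).symm
end
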